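/- Let a ≥ 2 and k ≥ 1 be integers, and let i be the number of Fibonacci numbers in the interval [a^k, a^(k+1)). Then Φ^(i−1) < a < Φ^(i+1), where Φ = (1 + √5)/2. -/

import Mathlib

open Nat (fib)
open Real

/-- The golden ratio Φ = (1 + √5)/2. -/
noncomputable def Phi : ℝ := (1 + Real.sqrt 5) / 2

lemma Phi_eq : Phi = goldenRatio := rfl

lemma aux_fib_le (n : ℕ) : (fib (n + 1) : ℝ) ≤ goldenRatio ^ n := by
  induction n using Nat.twoStepInduction with
  | zero => simp
  | one => simpa using one_lt_goldenRatio.le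
  | more n ih1 ih2 =>
    have h := goldenRatio_pow_sub_goldenRatio_pow n
    have : (fib (n + 3) : ℝ) = (fib (n + 1) : ℝ) + (fib (n + 2) : ℝ) := by
      rw [show n + 3 = (n + 1) + 2 from rfl, Nat.fib_add_two]; push_cast; ring
    rw [this]
    nlinarith [ih1, ih2]

lemma aux_le_fib (n : ℕ) : goldenRatio ^ n ≤ (fib (n + 2) : ℝ) := by
  induction n using Nat.twoStepInduction with
  | zero => simp
  | one => simpa [show fib 3 = 2 from rfl] using goldenRatio_lt_two.le
  | more n ih1 ih2 =>
    have h := goldenRatio_pow_sub_goldenRatio_pow n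
    have : (fib (n + 4) : ℝ) = (fib (n + 2) : ℝ) + (fib (n + 3) : ℝ) := by
      rw [show n + 4 = (n + 2) + 2 from rfl, Nat.fib_add_two]; push_cast; ring
    rw [this]
    nlinarith [ih1, ih2]

lemma aux_fib_lt (n : ℕ) : (fib n : ℝ) < goldenRatio ^ n := by
  cases n with
  | zero => simp
  | succ n =>
    calc (fib (n + 1) : ℝ) ≤ goldenRatio ^ n := aux_fib_le n
    _ < goldenRatio ^ (n + 1) := pow_lt_pow_right₀ one_lt_goldenRatio (Nat.lt_succ_self n)

lemma aux_binet (m j : ℕ) :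
    (fib (m + j) : ℝ) = goldenRatio ^ j * fib m + goldenConj ^ m * fib j := by
  rw [Real.coe_fib_eq, Real.coe_fib_eq, Real.coe_fib_eq, pow_add]
  have h5 : Real.sqrt 5 ≠ 0 := by positivity
  field_simp
  ring

lemma aux_abs_goldConj : |goldenConj| = goldenRatio⁻¹ := by
  rw [abs_of_neg goldenConj_neg, ← inv_goldenRatio]

/-- bound on the error term: `|ψ^m * fib j| ≤ fib j / φ^m < 1` when `fib j < φ^m`. -/
lemma aux_err (m j : ℕ) (h : (fib j : ℝ) < goldenRatio ^ m) :
    |goldenConj ^ m * (fib j : ℝ)| < 1 := by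
  rw [abs_mul, abs_pow, aux_abs_goldConj, abs_of_nonneg (by positivity : (0:ℝ) ≤ (fib j : ℝ)),
    inv_pow]
  have hp : (0:ℝ) < goldenRatio ^ m := pow_pos goldenRatio_pos m
  rw [inv_mul_lt_iff₀ hp, mul_one]
  exact h

lemma claimA (p j : ℕ) (hj : j ≤ p + 2) :
    goldenRatio ^ j * (fib (p + 3) : ℝ) < (fib (p + 3 + j) : ℝ) + 1 := by
  rw [aux_binet (p + 3) j]
  have herr : |goldenConj ^ (p + 3) * (fib j : ℝ)| < 1 := by
    apply aux_err
    calc (fib j : ℝ) < goldenRatio ^ j := aux_fib_lt j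
    _ ≤ goldenRatio ^ (p + 3) := pow_le_pow_right₀ one_lt_goldenRatio.le (by omega)
  have := neg_lt_of_abs_lt herr
  linarith

lemma claimB (p j : ℕ) :
    (fib (p + 2 + (j + 2)) : ℝ) < goldenRatio ^ (j + 2) * ((fib (p + 2) : ℝ) + 1) := by
  rw [aux_binet (p + 2) (j + 2)]
  have h1 : goldenConj ^ (p + 2) * (fib (j + 2) : ℝ) ≤ |goldenConj ^ (p + 2) * (fib (j + 2) : ℝ)| :=
    le_abs_self _
  have h2 : |goldenConj ^ (p + 2) * (fib (j + 2) : ℝ)| < goldenRatio ^ (j + 2) := by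
    rw [abs_mul, abs_pow, aux_abs_goldConj, abs_of_nonneg (by positivity : (0:ℝ) ≤ (fib (j+2) : ℝ)),
      inv_pow]
    have hp : (0:ℝ) < goldenRatio ^ (p + 2) := pow_pos goldenRatio_pos _
    rw [inv_mul_lt_iff₀ hp]
    calc (fib (j + 2) : ℝ) < goldenRatio ^ (j + 2) := aux_fib_lt (j + 2)
    _ ≤ goldenRatio ^ (p + 2) * goldenRatio ^ (j + 2) := by
        nlinarith [pow_pos goldenRatio_pos (j+2), one_le_pow₀ (M₀ := ℝ) (n := p+2) one_lt_goldenRatio.le]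
  nlinarith [h1, h2]

/-- Let `a ≥ 2` and `k ≥ 1` be integers, and let `i` be the number of Fibonacci numbers
in `[a^k, a^(k+1))`. Then `Φ^(i-1) < a < Φ^(i+1)`. -/
theorem fib_count_phi_bounds (a k : ℕ) (ha : 2 ≤ a) (hk : 1 ≤ k)
    (i : ℕ) (hi : i = (Set.range Nat.fib ∩ Set.Ico (a ^ k) (a ^ (k + 1))).ncard) :
    Phi ^ ((i : ℤ) - 1) < (a : ℝ) ∧ (a : ℝ) < Phi ^ ((i : ℤ) + 1) := by
  have hak : 2 ≤ a ^ k := le_trans ha (Nat.le_self_pow (by omega) a)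
  have hex : ∀ x : ℕ, ∃ n, x ≤ fib n := fun x =>
    ⟨x + 5, (Nat.le_add_right x 5).trans (Nat.le_fib_self (by omega))⟩
  set m := Nat.find (hex (a ^ k)) with hmdef
  set M := Nat.find (hex (a ^ (k + 1))) with hMdef
  have hm1 : a ^ k ≤ fib m := Nat.find_spec (hex (a ^ k))
  have hm2 : ∀ n < m, fib n < a ^ k := fun n hn => lt_of_not_ge (Nat.find_min (hex _) hn)
  have hm4 : ∀ n, a ^ k ≤ fib n → m ≤ n := fun n h => Nat.find_min' _ h
  have hM1 : a ^ (k + 1) ≤ fib M := Nat.find_spec (hex (a ^ (k + 1)))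
  have hM2 : ∀ n < M, fib n < a ^ (k + 1) := fun n hn => lt_of_not_ge (Nat.find_min (hex _) hn)
  have hm3 : 3 ≤ m := by
    by_contra h
    have : fib m ≤ fib 2 := Nat.fib_mono (by omega)
    simp [Nat.fib_two] at this
    omega
  clear_value m M
  obtain ⟨p, rfl⟩ : ∃ p, m = p + 3 := ⟨m - 3, by omega⟩
  -- fib (p+3) < a^(k+1)
  have hfm_lt : fib (p + 3) < a ^ (k + 1) := by
    have h1 : fib (p + 3) = fib (p + 1) + fib (p + 2) := Nat.fib_add_two
    have h2 : fib (p + 1) ≤ fib (p + 2) := Nat.fib_le_fib_succ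
    have h3 : fib (p + 2) < a ^ k := hm2 (p + 2) (by omega)
    have h4 : a ^ (k + 1) = a * a ^ k := by ring
    have : fib (p + 3) ≤ 2 * fib (p + 2) := by omega
    calc fib (p + 3) ≤ 2 * fib (p + 2) := this
    _ < 2 * a ^ k := by omega
    _ ≤ a * a ^ k := Nat.mul_le_mul_right _ ha
    _ = a ^ (k + 1) := h4.symm
  have hmM : p + 3 < M := by
    by_contra h
    have : fib M ≤ fib (p + 3) := Nat.fib_mono (by omega)
    omega
  -- the set is the image of Ico m M under fib
  have hset : Set.range Nat.fib ∩ Set.Ico (a ^ k) (a ^ (k + 1))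
      = Nat.fib '' Set.Ico (p + 3) M := by
    ext x
    constructor
    · rintro ⟨⟨n, rfl⟩, hx1, hx2⟩
      exact ⟨n, ⟨hm4 n hx1, by
        by_contra h
        have : fib M ≤ fib n := Nat.fib_mono (by omega)
        omega⟩, rfl⟩
    · rintro ⟨n, ⟨hn1, hn2⟩, rfl⟩
      exact ⟨⟨n, rfl⟩, le_trans hm1 (Nat.fib_mono hn1), hM2 n hn2⟩
  -- injectivity of fib on the interval
  have hinj : Set.InjOn Nat.fib (Set.Ico (p + 3) M) := by
    intro x hx y hy hxy
    obtain ⟨x', rfl⟩ : ∃ x', x = x' + 2 := ⟨x - 2, by have := hx.1; omega⟩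
    obtain ⟨y', rfl⟩ : ∃ y', y = y' + 2 := ⟨y - 2, by have := hy.1; omega⟩
    have : x' = y' := Nat.fib_add_two_strictMono.injective hxy
    omega
  have hcard : i = M - (p + 3) := by
    rw [hi, hset, Set.ncard_image_of_injOn hinj, ← Finset.coe_Ico, Set.ncard_coe_finset,
      Nat.card_Ico]
  obtain ⟨j, hj⟩ : ∃ j, M = p + 3 + j + 1 := ⟨M - (p + 3) - 1, by omega⟩
  have hij : i = j + 1 := by omega
  subst hj
  -- key numeric facts
  have hA : a ^ k ≤ fib (p + 3) := hm1
  have hB : fib (p + 2) < a ^ k := hm2 (p + 2) (by omega)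
  have hC : fib (p + 3 + j) < a ^ (k + 1) := hM2 _ (by omega)
  have hD : a ^ (k + 1) ≤ fib (p + 3 + j + 1) := hM1
  -- j ≤ p + 2
  have hjp : j ≤ p + 2 := by
    by_contra h
    push_neg at h
    have h1 : fib (2 * p + 6) ≤ fib (p + 3 + j) := Nat.fib_mono (by omega)
    have h2 : a ^ (k + 1) ≤ fib (p + 3) ^ 2 := by
      have : a ≤ a ^ k := Nat.le_self_pow (by omega) a
      calc a ^ (k + 1) = a * a ^ k := by ring
      _ ≤ a ^ k * a ^ k := Nat.mul_le_mul_right _ this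
      _ ≤ fib (p + 3) * fib (p + 3) := Nat.mul_le_mul hA hA
      _ = fib (p + 3) ^ 2 := (sq _).symm
    have h3 : fib (2 * p + 6) < fib (p + 3) ^ 2 := by omega
    -- real contradiction
    have h4 : ((fib (p + 3) : ℕ) : ℝ) ^ 2 ≤ goldenRatio ^ (2 * p + 4) := by
      have := aux_fib_le (p + 2)
      have h0 : (0:ℝ) ≤ (fib (p + 3) : ℝ) := by positivity
      calc ((fib (p + 3) : ℕ) : ℝ) ^ 2 ≤ (goldenRatio ^ (p + 2)) ^ 2 := by
            rw [show p + 3 = (p + 2) + 1 from rfl] at h0 ⊢; nlinarith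
      _ = goldenRatio ^ (2 * p + 4) := by rw [← pow_mul]; ring_nf
    have h5 : goldenRatio ^ (2 * p + 4) ≤ ((fib (2 * p + 6) : ℕ) : ℝ) := by
      have := aux_le_fib (2 * p + 4)
      rwa [show 2 * p + 4 + 2 = 2 * p + 6 from rfl] at this
    have h6 : ((fib (2 * p + 6) : ℕ) : ℝ) < ((fib (p + 3) : ℕ) : ℝ) ^ 2 := by
      exact_mod_cast Nat.cast_lt.mpr h3
    linarith
  -- real casts
  have hca : (2:ℝ) ≤ (a:ℝ) := by exact_mod_cast ha
  have hfib3_pos : (0:ℝ) < (fib (p + 3) : ℝ) := by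
    have : 0 < fib (p + 3) := by omega
    exact_mod_cast this
  -- lower bound
  have hlow : goldenRatio ^ j < (a : ℝ) := by
    have e1 : (a:ℝ) * (fib (p + 3) : ℝ) ≥ (fib (p + 3 + j) : ℝ) + 1 := by
      have : fib (p + 3 + j) + 1 ≤ a * fib (p + 3) := by
        calc fib (p + 3 + j) + 1 ≤ a ^ (k + 1) := hC
        _ = a * a ^ k := by ring
        _ ≤ a * fib (p + 3) := Nat.mul_le_mul_left _ hA
      exact_mod_cast this
    have e2 := claimA p j hjp
    have : goldenRatio ^ j * (fib (p + 3) : ℝ) < (a:ℝ) * (fib (p + 3) : ℝ) := by linarith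
    exact lt_of_mul_lt_mul_right this hfib3_pos.le
  -- upper bound
  have hhigh : (a : ℝ) < goldenRatio ^ (j + 2) := by
    have hq_pos : (0:ℝ) < (fib (p + 2) : ℝ) + 1 := by positivity
    have e1 : (a:ℝ) * ((fib (p + 2) : ℝ) + 1) ≤ (fib (p + 2 + (j + 2)) : ℝ) := by
      have : a * (fib (p + 2) + 1) ≤ fib (p + 2 + (j + 2)) := by
        calc a * (fib (p + 2) + 1) ≤ a * a ^ k := Nat.mul_le_mul_left _ (by omega)
        _ = a ^ (k + 1) := by ring
        _ ≤ fib (p + 3 + j + 1) := hD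
        _ = fib (p + 2 + (j + 2)) := by ring_nf
      exact_mod_cast this
    have e2 := claimB p j
    have : (a:ℝ) * ((fib (p + 2) : ℝ) + 1)
        < goldenRatio ^ (j + 2) * ((fib (p + 2) : ℝ) + 1) := lt_of_le_of_lt e1 e2
    exact lt_of_mul_lt_mul_right this hq_pos.le
  constructor
  · have : ((i : ℤ) - 1) = (j : ℤ) := by omega
    rw [this, Phi_eq, zpow_natCast]
    exact hlow
  · have : ((i : ℤ) + 1) = ((j + 2 : ℕ) : ℤ) := by omega
    rw [this, Phi_eq, zpow_natCast]
    exact hhigh
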